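/- Let 0 < γ ≤ 1, ρ ∈ (0,1) and γ(1−ρ) < A < γ. Set a = 0, b = A+γ and H(u) = G_γ(u−A) for u ∈ [0, A+γ]. Define v₂ : [0, A+γ] → ℝ by v₂(u) = (1 − A/γ)·u for 0 ≤ u ≤ γ−A, v₂(u) = G_γ(u−A) for γ−A ≤ u ≤ A+γ(2ρ−1), and v₂(u) = ρ·(u − A − γ(2ρ−1)) + γρ² for A+γ(2ρ−1) ≤ u ≤ A+γ. Then v₂ is admissible, and v₂ is the unique minimizer of the cost K_{0,A+γ} over all admissible functions: for every admissible v with v ≠ v₂ one has K_{0,A+γ}(v₂) < K_{0,A+γ}(v). -/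

import Mathlib

open MeasureTheory

/-- `h_ρ(z) = z log(z/ρ) + (1-z) log((1-z)/(1-ρ))` (with `0 log 0 = 0`,
which holds automatically since `Real.log 0 = 0`). -/
noncomputable def hRho (ρ z : ℝ) : ℝ :=
  z * Real.log (z / ρ) + (1 - z) * Real.log ((1 - z) / (1 - ρ))

/-- `G_γ(z)`: `(γ/4)(1+z/γ)²` for `|z| ≤ γ`, `0` for `z < -γ`, `z` for `z > γ`. -/
noncomputable def Gfun (γ z : ℝ) : ℝ :=
  if z < -γ then 0 else if γ < z then z else γ / 4 * (1 + z / γ) ^ 2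

/-- `v` is admissible on `[a,b]` with obstacle `H`: differentiable on `[a,b]`,
`v a = 0`, `0 ≤ v' ≤ 1` on `[a,b]`, and `v ≤ H` on `[a,b]`. -/
def Admissible (a b : ℝ) (H v : ℝ → ℝ) : Prop :=
  DifferentiableOn ℝ v (Set.Icc a b) ∧ v a = 0 ∧
    (∀ u ∈ Set.Icc a b, derivWithin v (Set.Icc a b) u ∈ Set.Icc (0 : ℝ) 1) ∧
    ∀ u ∈ Set.Icc a b, v u ≤ H u

/-- The cost `K_{a,b}(v) = ∫_a^b h_ρ(v'(u)) du`. -/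
noncomputable def cost (ρ a b : ℝ) (v : ℝ → ℝ) : ℝ :=
  ∫ u in a..b, hRho ρ (derivWithin v (Set.Icc a b) u)

/-- The candidate minimizer `v₂` for `γ(1-ρ) < A < γ`. -/
noncomputable def v2 (γ ρ A : ℝ) (u : ℝ) : ℝ :=
  if u ≤ γ - A then (1 - A / γ) * u
  else if u ≤ A + γ * (2 * ρ - 1) then Gfun γ (u - A)
  else ρ * (u - (A + γ * (2 * ρ - 1))) + γ * ρ ^ 2


open Set
set_option linter.unusedSectionVars false
set_option maxHeartbeats 1000000




noncomputable def ell (ρ z : ℝ) : ℝ :=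
  Real.log z - Real.log ρ - (Real.log (1 - z) - Real.log (1 - ρ))

lemma mul_log_split {z c : ℝ} (hz : 0 ≤ z) (hc : 0 < c) :
    z * Real.log (z / c) = z * Real.log z - z * Real.log c := by
  rcases eq_or_lt_of_le hz with h | h
  · simp [← h]
  · rw [Real.log_div (ne_of_gt h) (ne_of_gt hc)]; ring

lemma hRho_eq {ρ z : ℝ} (hρ0 : 0 < ρ) (hρ1 : ρ < 1) (hz0 : 0 ≤ z) (hz1 : z ≤ 1) :
    hRho ρ z = (z * Real.log z - z * Real.log ρ)
      + ((1 - z) * Real.log (1 - z) - (1 - z) * Real.log (1 - ρ)) := by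
  unfold hRho
  rw [mul_log_split hz0 hρ0, mul_log_split (by linarith) (by linarith)]

lemma kl_nonneg {z w : ℝ} (hz0 : 0 ≤ z) (hz1 : z ≤ 1) (hw0 : 0 < w) (hw1 : w < 1) :
    0 ≤ (z * Real.log z - z * Real.log w)
      + ((1 - z) * Real.log (1 - z) - (1 - z) * Real.log (1 - w)) := by
  have T1 : z * Real.log w - z * Real.log z ≤ w - z := by
    rcases eq_or_lt_of_le hz0 with h | h
    · simp [← h]; linarith
    · have : Real.log (w / z) ≤ w / z - 1 := Real.log_le_sub_one_of_pos (by positivity)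
      rw [Real.log_div (ne_of_gt hw0) (ne_of_gt h)] at this
      have := mul_le_mul_of_nonneg_left this (le_of_lt h)
      calc z * Real.log w - z * Real.log z = z * (Real.log w - Real.log z) := by ring
        _ ≤ z * (w / z - 1) := this
        _ = w - z := by field_simp
  have T2 : (1 - z) * Real.log (1 - w) - (1 - z) * Real.log (1 - z) ≤ z - w := by
    rcases eq_or_lt_of_le hz1 with h | h
    · simp [h]; linarith
    · have hz' : 0 < 1 - z := by linarith
      have : Real.log ((1 - w) / (1 - z)) ≤ (1 - w) / (1 - z) - 1 :=
        Real.log_le_sub_one_of_pos (div_pos (by linarith) hz')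
      rw [Real.log_div (by linarith) (ne_of_gt hz')] at this
      have := mul_le_mul_of_nonneg_left this (le_of_lt hz')
      calc (1 - z) * Real.log (1 - w) - (1 - z) * Real.log (1 - z)
          = (1 - z) * (Real.log (1 - w) - Real.log (1 - z)) := by ring
        _ ≤ (1 - z) * ((1 - w) / (1 - z) - 1) := this
        _ = z - w := by field_simp; ring
  linarith

lemma kl_pos {z w : ℝ} (hz0 : 0 ≤ z) (hz1 : z ≤ 1) (hw0 : 0 < w) (hw1 : w < 1)
    (hne : z ≠ w) :
    0 < (z * Real.log z - z * Real.log w)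
      + ((1 - z) * Real.log (1 - z) - (1 - z) * Real.log (1 - w)) := by
  rcases eq_or_lt_of_le hz0 with h0 | h0
  · -- z = 0
    have : Real.log (1 - w) < 0 := Real.log_neg (by linarith) (by linarith)
    simp [← h0]; nlinarith
  rcases eq_or_lt_of_le hz1 with h1 | h1
  · -- z = 1
    have : Real.log w < 0 := Real.log_neg hw0 hw1
    simp [h1]; nlinarith
  -- 0 < z < 1 : first term strict
  have T1 : z * Real.log w - z * Real.log z < w - z := by
    have hne' : w / z ≠ 1 := by
      intro h; apply hne; field_simp at h; linarith
    have : Real.log (w / z) < w / z - 1 := Real.log_lt_sub_one_of_pos (by positivity) hne'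
    rw [Real.log_div (ne_of_gt hw0) (ne_of_gt h0)] at this
    have := mul_lt_mul_of_pos_left this h0
    calc z * Real.log w - z * Real.log z = z * (Real.log w - Real.log z) := by ring
      _ < z * (w / z - 1) := this
      _ = w - z := by field_simp
  have hz' : 0 < 1 - z := by linarith
  have T2 : (1 - z) * Real.log (1 - w) - (1 - z) * Real.log (1 - z) ≤ z - w := by
    have : Real.log ((1 - w) / (1 - z)) ≤ (1 - w) / (1 - z) - 1 :=
      Real.log_le_sub_one_of_pos (div_pos (by linarith) hz')
    rw [Real.log_div (by linarith) (ne_of_gt hz')] at this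
    have := mul_le_mul_of_nonneg_left this (le_of_lt hz')
    calc (1 - z) * Real.log (1 - w) - (1 - z) * Real.log (1 - z)
        = (1 - z) * (Real.log (1 - w) - Real.log (1 - z)) := by ring
      _ ≤ (1 - z) * ((1 - w) / (1 - z) - 1) := this
      _ = z - w := by field_simp; ring
  linarith

lemma tangent_le {ρ z w : ℝ} (hρ0 : 0 < ρ) (hρ1 : ρ < 1)
    (hz0 : 0 ≤ z) (hz1 : z ≤ 1) (hw0 : 0 < w) (hw1 : w < 1) :
    hRho ρ w + ell ρ w * (z - w) ≤ hRho ρ z := by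
  have key := kl_nonneg hz0 hz1 hw0 hw1
  rw [hRho_eq hρ0 hρ1 hz0 hz1, hRho_eq hρ0 hρ1 (le_of_lt hw0) (le_of_lt hw1)]
  unfold ell
  nlinarith [key]

lemma tangent_lt {ρ z w : ℝ} (hρ0 : 0 < ρ) (hρ1 : ρ < 1)
    (hz0 : 0 ≤ z) (hz1 : z ≤ 1) (hw0 : 0 < w) (hw1 : w < 1) (hne : z ≠ w) :
    hRho ρ w + ell ρ w * (z - w) < hRho ρ z := by
  have key := kl_pos hz0 hz1 hw0 hw1 hne
  rw [hRho_eq hρ0 hρ1 hz0 hz1, hRho_eq hρ0 hρ1 (le_of_lt hw0) (le_of_lt hw1)]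
  unfold ell
  nlinarith [key]

set_option linter.unusedSectionVars false
set_option maxHeartbeats 1000000



noncomputable def wfun (γ ρ A u : ℝ) : ℝ :=
  if u ≤ γ - A then 1 - A / γ else if u ≤ A + γ * (2 * ρ - 1) then (1 + (u - A) / γ) / 2 else ρ

section v2facts

variable {γ ρ A : ℝ} (hγ0 : 0 < γ) (hρ0 : 0 < ρ) (hρ1 : ρ < 1)
  (hA1 : γ * (1 - ρ) < A) (hA2 : A < γ)

include hγ0 hρ0 hρ1 hA1 hA2

lemma hc1_pos : 0 < γ - A := by linarith

lemma hc1c2 : γ - A < A + γ * (2 * ρ - 1) := by nlinarith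

lemma hc2b : A + γ * (2 * ρ - 1) < A + γ := by nlinarith

lemma hs1_pos : 0 < 1 - A / γ := by
  have : A / γ < 1 := (div_lt_one hγ0).2 hA2
  linarith

lemma hs1_lt : 1 - A / γ < ρ := by
  have h : 1 - ρ < A / γ := (lt_div_iff₀ hγ0).2 (by linarith [hA1, mul_comm γ (1 - ρ)])
  linarith

lemma wfun_mem (u : ℝ) : wfun γ ρ A u ∈ Icc (1 - A / γ) ρ := by
  unfold wfun
  split_ifs with h1 h2
  · exact ⟨le_rfl, le_of_lt (hs1_lt hγ0 hρ0 hρ1 hA1 hA2)⟩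
  · push_neg at h1
    constructor
    · have key : (1 + (u - A) / γ) / 2 - (1 - A / γ) = (u - (γ - A)) / (2 * γ) := by
        field_simp; ring
      have : 0 ≤ (u - (γ - A)) / (2 * γ) := div_nonneg (by linarith) (by linarith)
      linarith
    · have key : ρ - (1 + (u - A) / γ) / 2 = ((A + γ * (2 * ρ - 1)) - u) / (2 * γ) := by
        field_simp; ring
      have : 0 ≤ ((A + γ * (2 * ρ - 1)) - u) / (2 * γ) := div_nonneg (by linarith) (by linarith)
      linarith
  · exact ⟨le_of_lt (hs1_lt hγ0 hρ0 hρ1 hA1 hA2), le_rfl⟩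

lemma Gfun_eq {u : ℝ} (h0 : 0 ≤ u) (hb : u ≤ A + γ) :
    Gfun γ (u - A) = γ / 4 * (1 + (u - A) / γ) ^ 2 := by
  unfold Gfun
  rw [if_neg (by push_neg; linarith), if_neg (by push_neg; linarith)]

lemma v2_mid {u : ℝ} (h1 : γ - A ≤ u) (h2 : u ≤ A + γ * (2 * ρ - 1)) :
    v2 γ ρ A u = γ / 4 * (1 + (u - A) / γ) ^ 2 := by
  have hG : Gfun γ (u - A) = γ / 4 * (1 + (u - A) / γ) ^ 2 :=
    Gfun_eq hγ0 hρ0 hρ1 hA1 hA2 (by linarith [hc1_pos hγ0 hρ0 hρ1 hA1 hA2])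
      (by linarith [hc2b hγ0 hρ0 hρ1 hA1 hA2])
  unfold v2
  rcases eq_or_lt_of_le h1 with h | h
  · rw [if_pos (le_of_eq h.symm)]
    rw [← h]; field_simp; ring
  · rw [if_neg (by push_neg; exact h), if_pos h2, hG]

lemma v2_le_H {u : ℝ} (h0 : 0 ≤ u) (hb : u ≤ A + γ) :
    v2 γ ρ A u ≤ Gfun γ (u - A) := by
  rw [Gfun_eq hγ0 hρ0 hρ1 hA1 hA2 h0 hb]
  unfold v2
  split_ifs with h1 h2
  · have key : γ / 4 * (1 + (u - A) / γ) ^ 2 - (1 - A / γ) * u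
        = (u - (γ - A)) ^ 2 / (4 * γ) := by field_simp; ring
    nlinarith [sq_nonneg (u - (γ - A)), div_nonneg (sq_nonneg (u - (γ - A))) (by linarith : (0:ℝ) ≤ 4 * γ)]
  · rw [Gfun_eq hγ0 hρ0 hρ1 hA1 hA2 h0 hb]
  · have key : γ / 4 * (1 + (u - A) / γ) ^ 2 - (ρ * (u - (A + γ * (2 * ρ - 1))) + γ * ρ ^ 2)
        = (u - (A + γ * (2 * ρ - 1))) ^ 2 / (4 * γ) := by field_simp; ring
    nlinarith [div_nonneg (sq_nonneg (u - (A + γ * (2 * ρ - 1)))) (by linarith : (0:ℝ) ≤ 4 * γ)]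

lemma v2_zero : v2 γ ρ A 0 = 0 := by
  unfold v2
  rw [if_pos (by linarith : (0:ℝ) ≤ γ - A)]
  ring

omit hρ0 hρ1 hA1 hA2 in
lemma q_deriv (u : ℝ) :
    HasDerivAt (fun x : ℝ => γ / 4 * (1 + (x - A) / γ) ^ 2) ((1 + (u - A) / γ) / 2) u := by
  have h1 : HasDerivAt (fun x : ℝ => 1 + (x - A) / γ) (1 / γ) u := by
    simpa using (((hasDerivAt_id u).sub_const A).div_const γ).const_add 1
  have h2 := (h1.pow 2).const_mul (γ / 4)
  refine h2.congr_deriv ?_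
  have hγ' : γ ≠ 0 := ne_of_gt hγ0
  norm_num
  field_simp
  ring

omit hγ0 hρ0 hρ1 hA1 hA2 in
lemma f3_deriv (u : ℝ) :
    HasDerivAt (fun x : ℝ => ρ * (x - (A + γ * (2 * ρ - 1))) + γ * ρ ^ 2) ρ u := by
  simpa using (((hasDerivAt_id u).sub_const (A + γ * (2 * ρ - 1))).const_mul ρ).add_const (γ * ρ ^ 2)

omit hγ0 hρ0 hρ1 hA1 hA2 in
lemma f1_deriv (u : ℝ) : HasDerivAt (fun x : ℝ => (1 - A / γ) * x) (1 - A / γ) u := by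
  simpa using (hasDerivAt_id u).const_mul (1 - A / γ)

lemma v2_right {u : ℝ} (h : A + γ * (2 * ρ - 1) ≤ u) :
    v2 γ ρ A u = ρ * (u - (A + γ * (2 * ρ - 1))) + γ * ρ ^ 2 := by
  have hc := hc1c2 hγ0 hρ0 hρ1 hA1 hA2
  unfold v2
  rw [if_neg (by push_neg; linarith)]
  rcases eq_or_lt_of_le h with he | hlt
  · rw [if_pos (le_of_eq he.symm), ← he]
    have := Gfun_eq hγ0 hρ0 hρ1 hA1 hA2 (u := A + γ * (2 * ρ - 1))
      (by linarith [hc1_pos hγ0 hρ0 hρ1 hA1 hA2]) (by linarith [hc2b hγ0 hρ0 hρ1 hA1 hA2])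
    rw [this]; field_simp; ring
  · rw [if_neg (by push_neg; exact hlt)]

lemma hasDerivAt_v2 (u : ℝ) : HasDerivAt (v2 γ ρ A) (wfun γ ρ A u) u := by
  have hc1 := hc1_pos hγ0 hρ0 hρ1 hA1 hA2
  have hc12 := hc1c2 hγ0 hρ0 hρ1 hA1 hA2
  have es1 : (1 + ((γ - A) - A) / γ) / 2 = 1 - A / γ := by field_simp; ring
  have eρ : (1 + ((A + γ * (2 * ρ - 1)) - A) / γ) / 2 = ρ := by field_simp; ring
  have r1 : ∀ x ≤ γ - A, v2 γ ρ A x = (1 - A / γ) * x := fun x hx => by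
    unfold v2; rw [if_pos hx]
  have r2 : ∀ x, γ - A ≤ x → x ≤ A + γ * (2 * ρ - 1) →
      v2 γ ρ A x = γ / 4 * (1 + (x - A) / γ) ^ 2 := fun x h1 h2 =>
    v2_mid hγ0 hρ0 hρ1 hA1 hA2 h1 h2
  have r3 := fun x hx => v2_right hγ0 hρ0 hρ1 hA1 hA2 (u := x) hx
  rcases lt_trichotomy u (γ - A) with h | h | h
  · have hw : wfun γ ρ A u = 1 - A / γ := if_pos (le_of_lt h)
    rw [hw]
    refine (f1_deriv (γ := γ) (A := A) u).congr_of_eventuallyEq ?_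
    filter_upwards [Iio_mem_nhds h] with x hx using r1 x (le_of_lt hx)
  · subst h
    have hw : wfun γ ρ A (γ - A) = 1 - A / γ := if_pos le_rfl
    rw [hw]
    have hleft : HasDerivWithinAt (v2 γ ρ A) (1 - A / γ) (Iic (γ - A)) (γ - A) := by
      refine ((f1_deriv (γ := γ) (A := A) _).hasDerivWithinAt).congr ?_ ?_
      · exact fun x hx => r1 x hx
      · exact r1 _ le_rfl
    have hright : HasDerivWithinAt (v2 γ ρ A) (1 - A / γ) (Ici (γ - A)) (γ - A) := by
      have hq := (q_deriv (A := A) hγ0 (γ - A)).hasDerivWithinAt (s := Ici (γ - A))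
      rw [es1] at hq
      refine hq.congr_of_eventuallyEq ?_ ?_
      · filter_upwards [nhdsWithin_le_nhds (Iio_mem_nhds hc12), self_mem_nhdsWithin] with x hx1 hx2
        exact r2 x hx2 (le_of_lt hx1)
      · exact r2 _ le_rfl (le_of_lt hc12)
    have := hleft.union hright
    rwa [Iic_union_Ici, hasDerivWithinAt_univ] at this
  · rcases lt_trichotomy u (A + γ * (2 * ρ - 1)) with h2 | h2 | h2
    · have hw : wfun γ ρ A u = (1 + (u - A) / γ) / 2 := by
        unfold wfun; rw [if_neg (by push_neg; exact h), if_pos (le_of_lt h2)]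
      rw [hw]
      refine (q_deriv (A := A) hγ0 u).congr_of_eventuallyEq ?_
      filter_upwards [Ioo_mem_nhds h h2] with x hx using r2 x (le_of_lt hx.1) (le_of_lt hx.2)
    · subst h2
      have hw : wfun γ ρ A (A + γ * (2 * ρ - 1)) = ρ := by
        unfold wfun; rw [if_neg (by push_neg; exact h), if_pos le_rfl, eρ]
      rw [hw]
      have hleft : HasDerivWithinAt (v2 γ ρ A) ρ (Iic (A + γ * (2 * ρ - 1)))
          (A + γ * (2 * ρ - 1)) := by
        have hq := (q_deriv (A := A) hγ0 (A + γ * (2 * ρ - 1))).hasDerivWithinAt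
          (s := Iic (A + γ * (2 * ρ - 1)))
        rw [eρ] at hq
        refine hq.congr_of_eventuallyEq ?_ ?_
        · filter_upwards [nhdsWithin_le_nhds (Ioi_mem_nhds h), self_mem_nhdsWithin] with x hx1 hx2
          exact r2 x (le_of_lt hx1) hx2
        · exact r2 _ (le_of_lt h) le_rfl
      have hright : HasDerivWithinAt (v2 γ ρ A) ρ (Ici (A + γ * (2 * ρ - 1)))
          (A + γ * (2 * ρ - 1)) := by
        refine ((f3_deriv (γ := γ) (ρ := ρ) (A := A) _).hasDerivWithinAt).congr ?_ ?_
        · exact fun x hx => r3 x hx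
        · exact r3 _ le_rfl
      have := hleft.union hright
      rwa [Iic_union_Ici, hasDerivWithinAt_univ] at this
    · have hw : wfun γ ρ A u = ρ := by
        unfold wfun; rw [if_neg (by push_neg; exact h), if_neg (by push_neg; exact h2)]
      rw [hw]
      refine (f3_deriv (γ := γ) (ρ := ρ) (A := A) u).congr_of_eventuallyEq ?_
      filter_upwards [Ioi_mem_nhds h2] with x hx using r3 x (le_of_lt hx)

lemma continuous_v2 : Continuous (v2 γ ρ A) := by
  have : Differentiable ℝ (v2 γ ρ A) := fun u =>
    (hasDerivAt_v2 hγ0 hρ0 hρ1 hA1 hA2 u).differentiableAt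
  exact this.continuous

lemma derivWithin_v2 {u : ℝ} (hu : u ∈ Icc (0:ℝ) (A + γ)) :
    derivWithin (v2 γ ρ A) (Icc 0 (A + γ)) u = wfun γ ρ A u := by
  have hb : (0:ℝ) < A + γ := by nlinarith
  exact ((hasDerivAt_v2 hγ0 hρ0 hρ1 hA1 hA2 u).hasDerivWithinAt).derivWithin
    (uniqueDiffOn_Icc hb u hu)

end v2facts
lemma intervalIntegrable_of_bdd {f : ℝ → ℝ} {a b C : ℝ} (hab : a ≤ b)
    (hmeas : AEStronglyMeasurable f (volume.restrict (Set.Ioc a b)))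
    (hbd : ∀ u ∈ Set.Ioc a b, |f u| ≤ C) :
    IntervalIntegrable f volume a b := by
  rw [intervalIntegrable_iff_integrableOn_Ioc_of_le hab]
  refine Integrable.mono' (integrable_const C) hmeas ?_
  rw [ae_restrict_iff' measurableSet_Ioc]
  exact Filter.Eventually.of_forall fun u hu => by
    simpa [Real.norm_eq_abs] using hbd u hu

lemma abs_mul_log_le_one {z : ℝ} (h0 : 0 ≤ z) (h1 : z ≤ 1) : |z * Real.log z| ≤ 1 := by
  rcases eq_or_lt_of_le h0 with h | h
  · simp [← h]
  · have hlog : Real.log z ≤ 0 := Real.log_nonpos h0 h1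
    have h2 : Real.log z⁻¹ ≤ z⁻¹ - 1 := Real.log_le_sub_one_of_pos (by positivity)
    rw [Real.log_inv] at h2
    have h3 : z * (-Real.log z) ≤ z * (z⁻¹ - 1) :=
      mul_le_mul_of_nonneg_left (by linarith) h0
    have h4 : z * (z⁻¹ - 1) = 1 - z := by field_simp
    rw [abs_of_nonpos (mul_nonpos_of_nonneg_of_nonpos h0 hlog)]
    nlinarith

lemma hRho_bound {ρ z : ℝ} (hρ0 : 0 < ρ) (hρ1 : ρ < 1) (h0 : 0 ≤ z) (h1 : z ≤ 1) :
    |hRho ρ z| ≤ 2 + |Real.log ρ| + |Real.log (1 - ρ)| := by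
  rw [hRho_eq hρ0 hρ1 h0 h1]
  have b1 := abs_mul_log_le_one h0 h1
  have b2 := abs_mul_log_le_one (by linarith : (0:ℝ) ≤ 1 - z) (by linarith)
  have b3 : |z * Real.log ρ| ≤ |Real.log ρ| := by
    rw [abs_mul, abs_of_nonneg h0]
    exact mul_le_of_le_one_left (abs_nonneg _) h1
  have b4 : |(1 - z) * Real.log (1 - ρ)| ≤ |Real.log (1 - ρ)| := by
    rw [abs_mul, abs_of_nonneg (by linarith : (0:ℝ) ≤ 1 - z)]
    exact mul_le_of_le_one_left (abs_nonneg _) (by linarith)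
  have t1 : |z * Real.log z - z * Real.log ρ| ≤ |z * Real.log z| + |z * Real.log ρ| :=
    abs_sub _ _
  have t2 : |(1 - z) * Real.log (1 - z) - (1 - z) * Real.log (1 - ρ)|
      ≤ |(1 - z) * Real.log (1 - z)| + |(1 - z) * Real.log (1 - ρ)| := abs_sub _ _
  calc |z * Real.log z - z * Real.log ρ
        + ((1 - z) * Real.log (1 - z) - (1 - z) * Real.log (1 - ρ))|
      ≤ |z * Real.log z - z * Real.log ρ|
        + |(1 - z) * Real.log (1 - z) - (1 - z) * Real.log (1 - ρ)| := abs_add_le _ _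
    _ ≤ 2 + |Real.log ρ| + |Real.log (1 - ρ)| := by linarith

lemma ell_self (ρ : ℝ) : ell ρ ρ = 0 := by unfold ell; ring

lemma ell_mono {ρ z z' : ℝ} (h0 : 0 < z) (hz : z ≤ z') (h1 : z' < 1) :
    ell ρ z ≤ ell ρ z' := by
  unfold ell
  have l1 : Real.log z ≤ Real.log z' := Real.log_le_log h0 hz
  have l2 : Real.log (1 - z') ≤ Real.log (1 - z) := Real.log_le_log (by linarith) (by linarith)
  linarith

theorem stmt1 (γ ρ A : ℝ) (hγ0 : 0 < γ) (hγ1 : γ ≤ 1)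
    (hρ0 : 0 < ρ) (hρ1 : ρ < 1) (hA1 : γ * (1 - ρ) < A) (hA2 : A < γ) :
    Admissible 0 (A + γ) (fun u => Gfun γ (u - A)) (v2 γ ρ A) ∧
    ∀ v : ℝ → ℝ,
      Admissible 0 (A + γ) (fun u => Gfun γ (u - A)) v →
      (∃ u ∈ Set.Icc (0 : ℝ) (A + γ), v u ≠ v2 γ ρ A u) →
      cost ρ 0 (A + γ) (v2 γ ρ A) < cost ρ 0 (A + γ) v := by
  have hb0 : (0:ℝ) < A + γ := by nlinarith
  have hc1p := hc1_pos hγ0 hρ0 hρ1 hA1 hA2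
  have hc12 := hc1c2 hγ0 hρ0 hρ1 hA1 hA2
  have h2b := hc2b hγ0 hρ0 hρ1 hA1 hA2
  have hs1p := hs1_pos hγ0 hρ0 hρ1 hA1 hA2
  have hs1ρ := hs1_lt hγ0 hρ0 hρ1 hA1 hA2
  have hv20 : v2 γ ρ A 0 = 0 := v2_zero hγ0 hρ0 hρ1 hA1 hA2
  constructor
  · refine ⟨fun u hu => (hasDerivAt_v2 hγ0 hρ0 hρ1 hA1 hA2 u).differentiableAt.differentiableWithinAt,
      hv20, fun u hu => ?_, fun u hu => v2_le_H hγ0 hρ0 hρ1 hA1 hA2 hu.1 hu.2⟩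
    rw [derivWithin_v2 hγ0 hρ0 hρ1 hA1 hA2 hu]
    have h := wfun_mem hγ0 hρ0 hρ1 hA1 hA2 u
    exact ⟨le_trans hs1p.le h.1, le_trans h.2 hρ1.le⟩
  intro v hv hne
  obtain ⟨hvd, hv0, hvdb, hvle⟩ := hv
  set V' : ℝ → ℝ := derivWithin v (Icc 0 (A + γ)) with hV'def
  set W : ℝ → ℝ := wfun γ ρ A with hWdef
  have hWmem : ∀ u, W u ∈ Icc (1 - A / γ) ρ := wfun_mem hγ0 hρ0 hρ1 hA1 hA2
  have hW0 : ∀ u, 0 < W u := fun u => lt_of_lt_of_le hs1p (hWmem u).1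
  have hW1 : ∀ u, W u < 1 := fun u => lt_of_le_of_lt (hWmem u).2 hρ1
  have hVmem : ∀ u ∈ Icc (0:ℝ) (A + γ), V' u ∈ Icc (0:ℝ) 1 := hvdb
  have hVd : ∀ u ∈ Ioo (0:ℝ) (A + γ), HasDerivAt v (V' u) u := fun u hu =>
    ((hvd u ⟨hu.1.le, hu.2.le⟩).hasDerivWithinAt).hasDerivAt (Icc_mem_nhds hu.1 hu.2)
  have hVcont : ContinuousOn v (Icc 0 (A + γ)) := hvd.continuousOn
  -- measurability
  have hWm : Measurable W := by
    rw [hWdef]; unfold wfun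
    refine Measurable.ite (measurableSet_le measurable_id measurable_const) measurable_const ?_
    refine Measurable.ite (measurableSet_le measurable_id measurable_const) ?_ measurable_const
    exact (((measurable_id.sub measurable_const).div_const γ).const_add 1).div_const 2
  have hVae : ∀ {a' b' : ℝ}, 0 ≤ a' → b' ≤ A + γ →
      (∀ᵐ x ∂(volume.restrict (Ioc a' b')), V' x = deriv v x) := by
    intro a' b' ha' hb'
    rw [ae_restrict_iff' measurableSet_Ioc, ae_iff]
    refine measure_mono_null ?_ (Real.volume_singleton (a := b'))
    intro x hx
    simp only [mem_setOf_eq] at hx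
    push_neg at hx
    obtain ⟨hx1, hx2⟩ := hx
    by_contra hxb
    have hxne : x ≠ b' := by simpa using hxb
    have hxlt : x < b' := lt_of_le_of_ne hx1.2 hxne
    exact hx2 ((hVd x ⟨lt_of_le_of_lt ha' hx1.1, lt_of_lt_of_le hxlt hb'⟩).deriv.symm) |>.elim
  have hVaem : ∀ {a' b' : ℝ}, 0 ≤ a' → b' ≤ A + γ →
      AEStronglyMeasurable V' (volume.restrict (Ioc a' b')) := fun ha' hb' =>
    (measurable_deriv v).aestronglyMeasurable.congr ((hVae ha' hb').mono fun x hx => hx.symm)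
  set φ : ℝ → ℝ := fun u => ell ρ (W u) with hφdef
  have hφle : ∀ u, ell ρ (1 - A / γ) ≤ φ u ∧ φ u ≤ 0 := by
    intro u
    constructor
    · exact ell_mono hs1p (hWmem u).1 (hW1 u)
    · have h := ell_mono (ρ := ρ) (hW0 u) (hWmem u).2 hρ1
      rwa [ell_self] at h
  have hφbd : ∀ u, |φ u| ≤ |ell ρ (1 - A / γ)| := by
    intro u
    obtain ⟨h1, h2⟩ := hφle u
    rw [abs_of_nonpos h2, abs_of_nonpos (le_trans h1 h2)]
    linarith
  have hφm : Measurable φ := by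
    rw [hφdef]; unfold ell
    exact ((Real.measurable_log.comp hWm).sub measurable_const).sub
      ((Real.measurable_log.comp (measurable_const.sub hWm)).sub measurable_const)
  have hRm : Measurable (hRho ρ) := by
    unfold hRho
    exact (measurable_id.mul (Real.measurable_log.comp (measurable_id.div_const ρ))).add
      ((measurable_const.sub measurable_id).mul
        (Real.measurable_log.comp ((measurable_const.sub measurable_id).div_const (1 - ρ))))
  -- interval integrability
  have IIW : ∀ a' b' : ℝ, a' ≤ b' → IntervalIntegrable W volume a' b' := by
    intro a' b' h
    refine intervalIntegrable_of_bdd (C := 1) h (hWm.aestronglyMeasurable.restrict) ?_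
    intro u hu
    rw [abs_of_nonneg (hW0 u).le]
    exact le_trans (hWmem u).2 hρ1.le
  have IIV : ∀ a' b' : ℝ, 0 ≤ a' → a' ≤ b' → b' ≤ A + γ →
      IntervalIntegrable V' volume a' b' := by
    intro a' b' h0 h1 h2
    refine intervalIntegrable_of_bdd (C := 1) h1 (hVaem h0 h2) ?_
    intro u hu
    have hm := hVmem u ⟨le_trans h0 hu.1.le, le_trans hu.2 h2⟩
    rw [abs_of_nonneg hm.1]; exact hm.2
  have IIVW : ∀ a' b' : ℝ, 0 ≤ a' → a' ≤ b' → b' ≤ A + γ →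
      IntervalIntegrable (fun u => V' u - W u) volume a' b' :=
    fun a' b' h0 h1 h2 => (IIV a' b' h0 h1 h2).sub (IIW a' b' h1)
  have IIφΔ : ∀ a' b' : ℝ, 0 ≤ a' → a' ≤ b' → b' ≤ A + γ →
      IntervalIntegrable (fun u => φ u * (V' u - W u)) volume a' b' := by
    intro a' b' h0 h1 h2
    refine intervalIntegrable_of_bdd (C := |ell ρ (1 - A / γ)| * 2) h1 ?_ ?_
    · exact (hφm.aestronglyMeasurable.restrict).mul
        ((hVaem h0 h2).sub hWm.aestronglyMeasurable.restrict)
    · intro u hu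
      have hm := hVmem u ⟨le_trans h0 hu.1.le, le_trans hu.2 h2⟩
      rw [abs_mul]
      have hΔ : |V' u - W u| ≤ 2 := by
        refine abs_le.2 ⟨?_, ?_⟩ <;> nlinarith [hW0 u, hW1 u, hm.1, hm.2]
      exact mul_le_mul (hφbd u) hΔ (abs_nonneg _) (abs_nonneg _)
  have IIhV : IntervalIntegrable (fun u => hRho ρ (V' u)) volume 0 (A + γ) := by
    refine intervalIntegrable_of_bdd (C := 2 + |Real.log ρ| + |Real.log (1 - ρ)|) hb0.le ?_ ?_
    · exact ((hRm.comp (measurable_deriv v)).aestronglyMeasurable).congr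
        ((hVae le_rfl le_rfl).mono fun x hx => congrArg (hRho ρ) hx.symm)
    · intro u hu
      have hm := hVmem u ⟨hu.1.le, hu.2⟩
      exact hRho_bound hρ0 hρ1 hm.1 hm.2
  have IIhW : IntervalIntegrable (fun u => hRho ρ (W u)) volume 0 (A + γ) := by
    refine intervalIntegrable_of_bdd (C := 2 + |Real.log ρ| + |Real.log (1 - ρ)|) hb0.le
      ((hRm.comp hWm).aestronglyMeasurable.restrict) ?_
    intro u hu
    exact hRho_bound hρ0 hρ1 (hW0 u).le (hW1 u).le
  -- FTC
  have ftcV : ∀ t, t ∈ Icc (0:ℝ) (A + γ) → ∫ u in (0:ℝ)..t, V' u = v t - v 0 := by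
    intro t ht
    refine intervalIntegral.integral_eq_sub_of_hasDeriv_right_of_le ht.1
      (hVcont.mono (Icc_subset_Icc le_rfl ht.2)) ?_ (IIV 0 t le_rfl ht.1 ht.2)
    intro x hx
    exact (hVd x ⟨hx.1, lt_of_lt_of_le hx.2 ht.2⟩).hasDerivWithinAt
  have ftcW : ∀ t, t ∈ Icc (0:ℝ) (A + γ) →
      ∫ u in (0:ℝ)..t, W u = v2 γ ρ A t - v2 γ ρ A 0 := by
    intro t ht
    refine intervalIntegral.integral_eq_sub_of_hasDeriv_right_of_le ht.1
      ((continuous_v2 hγ0 hρ0 hρ1 hA1 hA2).continuousOn) ?_ (IIW 0 t ht.1)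
    intro x hx
    exact (hasDerivAt_v2 hγ0 hρ0 hρ1 hA1 hA2 x).hasDerivWithinAt
  -- values of W on pieces
  have es1 : (1 + ((γ - A) - A) / γ) / 2 = 1 - A / γ := by field_simp; ring
  have eρ2 : (1 + ((A + γ * (2 * ρ - 1)) - A) / γ) / 2 = ρ := by field_simp; ring
  have hWr1 : ∀ u : ℝ, u ≤ γ - A → W u = 1 - A / γ := fun u hu => if_pos hu
  have hWr2 : ∀ u : ℝ, γ - A ≤ u → u ≤ A + γ * (2 * ρ - 1) →
      W u = (1 + (u - A) / γ) / 2 := by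
    intro u h1 h2
    rcases eq_or_lt_of_le h1 with h | h
    · rw [hWdef]; unfold wfun; rw [if_pos (le_of_eq h.symm), ← h, es1]
    · rw [hWdef]; unfold wfun; rw [if_neg (not_le.2 h), if_pos h2]
  have hWr3 : ∀ u : ℝ, A + γ * (2 * ρ - 1) ≤ u → W u = ρ := by
    intro u h
    rcases eq_or_lt_of_le h with h' | h'
    · rw [hWdef]; unfold wfun
      rw [if_neg (not_le.2 (by linarith : γ - A < u)), if_pos (le_of_eq h'.symm), ← h', eρ2]
    · rw [hWdef]; unfold wfun
      rw [if_neg (not_le.2 (by linarith : γ - A < u)), if_neg (not_le.2 h')]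
  -- cost identities
  have costv : cost ρ 0 (A + γ) v = ∫ u in (0:ℝ)..(A + γ), hRho ρ (V' u) := rfl
  have costv2 : cost ρ 0 (A + γ) (v2 γ ρ A) = ∫ u in (0:ℝ)..(A + γ), hRho ρ (W u) := by
    unfold cost
    apply intervalIntegral.integral_congr
    intro u hu
    rw [uIcc_of_le hb0.le] at hu
    show hRho ρ (derivWithin (v2 γ ρ A) (Icc 0 (A + γ)) u) = hRho ρ (W u)
    rw [derivWithin_v2 hγ0 hρ0 hρ1 hA1 hA2 hu, hWdef]
  -- D
  set D : ℝ → ℝ := fun u => hRho ρ (V' u) - hRho ρ (W u) - φ u * (V' u - W u) with hDdef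
  have hD0 : ∀ u ∈ Icc (0:ℝ) (A + γ), 0 ≤ D u := by
    intro u hu
    have hm := hVmem u hu
    have ht := tangent_le hρ0 hρ1 hm.1 hm.2 (hW0 u) (hW1 u)
    simp only [hDdef, hφdef]
    linarith
  have hDpos : ∀ u ∈ Icc (0:ℝ) (A + γ), V' u ≠ W u → 0 < D u := by
    intro u hu hne'
    have hm := hVmem u hu
    have ht := tangent_lt hρ0 hρ1 hm.1 hm.2 (hW0 u) (hW1 u) hne'
    simp only [hDdef, hφdef]
    linarith
  have IID : IntervalIntegrable D volume 0 (A + γ) :=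
    (IIhV.sub IIhW).sub (IIφΔ 0 (A + γ) le_rfl hb0.le le_rfl)
  -- split
  have e1 := intervalIntegral.integral_add_adjacent_intervals
    (IIφΔ 0 (γ - A) le_rfl hc1p.le (by linarith))
    (IIφΔ (γ - A) (A + γ * (2 * ρ - 1)) hc1p.le hc12.le h2b.le)
  have e2 := intervalIntegral.integral_add_adjacent_intervals
    (IIφΔ 0 (A + γ * (2 * ρ - 1)) le_rfl (by linarith) h2b.le)
    (IIφΔ (A + γ * (2 * ρ - 1)) (A + γ) (by linarith) h2b.le le_rfl)
  -- P1
  have P1 : ∫ u in (0:ℝ)..(γ - A), φ u * (V' u - W u)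
      = ell ρ (1 - A / γ) * ((v (γ - A) - v 0) - (v2 γ ρ A (γ - A) - v2 γ ρ A 0)) := by
    have hcongr : EqOn (fun u => φ u * (V' u - W u))
        (fun u => ell ρ (1 - A / γ) * (V' u - W u)) (uIcc 0 (γ - A)) := by
      intro u hu
      rw [uIcc_of_le hc1p.le] at hu
      simp only [hφdef]
      rw [hWr1 u hu.2]
    rw [intervalIntegral.integral_congr hcongr, intervalIntegral.integral_const_mul,
      intervalIntegral.integral_sub (IIV 0 (γ - A) le_rfl hc1p.le (by linarith))
        (IIW 0 (γ - A) hc1p.le),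
      ftcV (γ - A) ⟨hc1p.le, by linarith⟩, ftcW (γ - A) ⟨hc1p.le, by linarith⟩]
  -- P3
  have P3 : ∫ u in (A + γ * (2 * ρ - 1))..(A + γ), φ u * (V' u - W u) = 0 := by
    have hcongr : EqOn (fun u => φ u * (V' u - W u)) (fun _ => (0:ℝ))
        (uIcc (A + γ * (2 * ρ - 1)) (A + γ)) := by
      intro u hu
      rw [uIcc_of_le h2b.le] at hu
      simp only [hφdef]
      rw [hWr3 u hu.1, ell_self]
      ring
    rw [intervalIntegral.integral_congr hcongr]
    simp
  -- middle piece, integration by parts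
  set g : ℝ → ℝ := fun u => v u - v2 γ ρ A u with hgdef
  set m : ℝ → ℝ := fun u => (1 + (u - A) / γ) / 2 with hmdef
  have hmd : ∀ x : ℝ, HasDerivAt m (1 / γ / 2) x := by
    intro x
    have h := ((((hasDerivAt_id x).sub_const A).div_const γ).const_add 1).div_const 2
    simpa using h
  have hmlo : ∀ x ∈ Icc (γ - A) (A + γ * (2 * ρ - 1)), 1 - A / γ ≤ m x ∧ m x ≤ ρ := by
    intro x hx
    constructor
    · have key : m x - (1 - A / γ) = (x - (γ - A)) / (2 * γ) := by
        rw [hmdef]; field_simp; ring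
      have h2 : 0 ≤ (x - (γ - A)) / (2 * γ) :=
        div_nonneg (by linarith [hx.1]) (by linarith)
      linarith
    · have key : ρ - m x = ((A + γ * (2 * ρ - 1)) - x) / (2 * γ) := by
        rw [hmdef]; field_simp; ring
      have h2 : 0 ≤ ((A + γ * (2 * ρ - 1)) - x) / (2 * γ) :=
        div_nonneg (by linarith [hx.2]) (by linarith)
      linarith
  set ψ : ℝ → ℝ := fun u => ell ρ (m u) with hψdef
  set ψ' : ℝ → ℝ := fun u => 1 / γ / 2 / (m u) + 1 / γ / 2 / (1 - m u) with hψ'def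
  have hψd : ∀ x ∈ Icc (γ - A) (A + γ * (2 * ρ - 1)), HasDerivAt ψ (ψ' x) x := by
    intro x hx
    obtain ⟨hl, hr⟩ := hmlo x hx
    have h0 : 0 < m x := lt_of_lt_of_le hs1p hl
    have h1 : m x < 1 := lt_of_le_of_lt hr hρ1
    have d1 : HasDerivAt (fun u => Real.log (m u)) (1 / γ / 2 / (m x)) x :=
      (hmd x).log (ne_of_gt h0)
    have d2 : HasDerivAt (fun u => Real.log (1 - m u)) ((0 - 1 / γ / 2) / (1 - m x)) x :=
      ((hasDerivAt_const x (1:ℝ)).sub (hmd x)).log (by intro hc; linarith [hc] : (1:ℝ) - m x ≠ 0)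
    have hd := (d1.sub_const (Real.log ρ)).sub (d2.sub_const (Real.log (1 - ρ)))
    have heq : ψ = fun u => (Real.log (m u) - Real.log ρ)
        - (Real.log (1 - m u) - Real.log (1 - ρ)) := by
      funext u; simp only [hψdef]; rfl
    rw [heq]
    refine hd.congr_deriv ?_
    rw [hψ'def]
    field_simp
    ring
  have hψ'pos : ∀ x ∈ Icc (γ - A) (A + γ * (2 * ρ - 1)), 0 ≤ ψ' x := by
    intro x hx
    obtain ⟨hl, hr⟩ := hmlo x hx
    have h0 : 0 < m x := lt_of_lt_of_le hs1p hl
    have h1 : m x < 1 := lt_of_le_of_lt hr hρ1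
    rw [hψ'def]
    have q1 : 0 ≤ 1 / γ / 2 / (m x) := div_nonneg (by positivity) h0.le
    have q2 : 0 ≤ 1 / γ / 2 / (1 - m x) := div_nonneg (by positivity) (by linarith)
    linarith
  have hmc : Continuous m := by
    rw [hmdef]
    exact (continuous_const.add ((continuous_id.sub continuous_const).div_const γ)).div_const 2
  have hψ'cont : ContinuousOn ψ' (Icc (γ - A) (A + γ * (2 * ρ - 1))) := by
    rw [hψ'def]
    refine ContinuousOn.add ?_ ?_
    · exact continuousOn_const.div hmc.continuousOn
        (fun x hx => ne_of_gt (lt_of_lt_of_le hs1p (hmlo x hx).1))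
    · refine continuousOn_const.div (continuous_const.sub hmc).continuousOn ?_
      intro x hx
      have := lt_of_le_of_lt (hmlo x hx).2 hρ1
      intro hc; rw [sub_eq_zero] at hc; exact absurd hc.symm (ne_of_lt this)
  have hgcont : ContinuousOn g (uIcc (γ - A) (A + γ * (2 * ρ - 1))) := by
    rw [uIcc_of_le hc12.le, hgdef]
    exact (hVcont.mono (Icc_subset_Icc hc1p.le h2b.le)).sub
      (continuous_v2 hγ0 hρ0 hρ1 hA1 hA2).continuousOn
  have hgd : ∀ x ∈ Ioo (min (γ - A) (A + γ * (2 * ρ - 1))) (max (γ - A) (A + γ * (2 * ρ - 1))),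
      HasDerivAt g (V' x - W x) x := by
    rw [min_eq_left hc12.le, max_eq_right hc12.le]
    intro x hx
    exact (hVd x ⟨lt_trans hc1p hx.1, lt_trans hx.2 h2b⟩).sub
      (hasDerivAt_v2 hγ0 hρ0 hρ1 hA1 hA2 x)
  have hψIoo : ∀ x ∈ Ioo (min (γ - A) (A + γ * (2 * ρ - 1))) (max (γ - A) (A + γ * (2 * ρ - 1))),
      HasDerivAt ψ (ψ' x) x := by
    rw [min_eq_left hc12.le, max_eq_right hc12.le]
    intro x hx
    exact hψd x ⟨hx.1.le, hx.2.le⟩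
  have hψcont : ContinuousOn ψ (uIcc (γ - A) (A + γ * (2 * ρ - 1))) := by
    rw [uIcc_of_le hc12.le]
    exact fun x hx => (hψd x hx).continuousAt.continuousWithinAt
  have IIψ' : IntervalIntegrable ψ' volume (γ - A) (A + γ * (2 * ρ - 1)) := by
    apply ContinuousOn.intervalIntegrable
    rwa [uIcc_of_le hc12.le]
  have bp := intervalIntegral.integral_mul_deriv_eq_deriv_mul_of_hasDerivAt hψcont hgcont
    hψIoo hgd IIψ' (IIVW (γ - A) (A + γ * (2 * ρ - 1)) hc1p.le hc12.le h2b.le)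
  have P2eq : ∫ u in (γ - A)..(A + γ * (2 * ρ - 1)), φ u * (V' u - W u)
      = ∫ u in (γ - A)..(A + γ * (2 * ρ - 1)), ψ u * (V' u - W u) := by
    apply intervalIntegral.integral_congr
    intro u hu
    rw [uIcc_of_le hc12.le] at hu
    simp only [hφdef, hψdef]
    rw [hWr2 u hu.1 hu.2]
  have hψc2 : ψ (A + γ * (2 * ρ - 1)) = 0 := by
    show ell ρ ((1 + ((A + γ * (2 * ρ - 1)) - A) / γ) / 2) = 0
    rw [eρ2, ell_self]
  have hψc1 : ψ (γ - A) = ell ρ (1 - A / γ) := by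
    show ell ρ ((1 + ((γ - A) - A) / γ) / 2) = _
    rw [es1]
  have hg0 : ∀ u ∈ Icc (γ - A) (A + γ * (2 * ρ - 1)), g u ≤ 0 := by
    intro u hu
    have h1 : v u ≤ Gfun γ (u - A) := hvle u ⟨by linarith [hu.1], by linarith [hu.2]⟩
    have h2 : v2 γ ρ A u = Gfun γ (u - A) := by
      rw [v2_mid hγ0 hρ0 hρ1 hA1 hA2 hu.1 hu.2,
        Gfun_eq hγ0 hρ0 hρ1 hA1 hA2 (by linarith [hu.1]) (by linarith [hu.2])]
    rw [hgdef]
    simp only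
    linarith
  have hint_nonpos : ∫ x in (γ - A)..(A + γ * (2 * ρ - 1)), ψ' x * g x ≤ 0 := by
    have hnn : 0 ≤ ∫ x in (γ - A)..(A + γ * (2 * ρ - 1)), -(ψ' x * g x) := by
      apply intervalIntegral.integral_nonneg hc12.le
      intro u hu
      rw [← mul_neg]
      exact mul_nonneg (hψ'pos u hu) (neg_nonneg.2 (hg0 u hu))
    rw [intervalIntegral.integral_neg] at hnn
    linarith
  -- sum of pieces is nonnegative
  have hgc1 : g (γ - A) = v (γ - A) - v2 γ ρ A (γ - A) := rfl
  have Snn : 0 ≤ ∫ u in (0:ℝ)..(A + γ), φ u * (V' u - W u) := by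
    rw [← e2, ← e1, P1, P2eq, bp, hψc1, hψc2, P3, hv0, hv20, hgc1]
    simp only [zero_mul, zero_sub, add_zero, sub_zero]
    linarith [hint_nonpos]
  -- cost difference
  have key : cost ρ 0 (A + γ) v - cost ρ 0 (A + γ) (v2 γ ρ A)
      = (∫ u in (0:ℝ)..(A + γ), D u) + ∫ u in (0:ℝ)..(A + γ), φ u * (V' u - W u) := by
    rw [costv, costv2, ← intervalIntegral.integral_sub IIhV IIhW]
    have hDe : (∫ u in (0:ℝ)..(A + γ), D u)
        = ∫ u in (0:ℝ)..(A + γ), (hRho ρ (V' u) - hRho ρ (W u)) - φ u * (V' u - W u) := rfl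
    rw [hDe, intervalIntegral.integral_sub (IIhV.sub IIhW)
      (IIφΔ 0 (A + γ) le_rfl hb0.le le_rfl)]
    ring
  -- positivity of ∫ D
  obtain ⟨u0, hu0, hneq⟩ := hne
  have hTpos : 0 < volume {u | u ∈ Ioo (0:ℝ) (A + γ) ∧ V' u ≠ W u} := by
    rw [pos_iff_ne_zero]
    intro hT0
    have veq : ∀ t ∈ Icc (0:ℝ) (A + γ), v t = v2 γ ρ A t := by
      intro t ht
      have hae2 : ∀ᵐ x ∂(volume : Measure ℝ), x ∈ Set.uIoc (0:ℝ) t → V' x = W x := by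
        rw [ae_iff]
        refine measure_mono_null ?_ (measure_union_null hT0 (Real.volume_singleton (a := t)))
        intro x hx
        simp only [mem_setOf_eq] at hx
        push_neg at hx
        obtain ⟨hx1, hx2⟩ := hx
        rw [uIoc_of_le ht.1] at hx1
        rcases eq_or_lt_of_le hx1.2 with h | h
        · right; simpa using h
        · left; exact ⟨⟨hx1.1, lt_of_lt_of_le h ht.2⟩, hx2⟩
      have hI := intervalIntegral.integral_congr_ae hae2
      rw [ftcV t ht, ftcW t ht, hv0, hv20] at hI
      linarith
    exact hneq (veq u0 hu0)
  have hDint_pos : 0 < ∫ u in (0:ℝ)..(A + γ), D u := by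
    rw [intervalIntegral.integral_of_le hb0.le]
    have hIDon : Integrable D (volume.restrict (Ioc 0 (A + γ))) := by
      have h := IID
      rwa [intervalIntegrable_iff_integrableOn_Ioc_of_le hb0.le] at h
    have hnn : 0 ≤ᵐ[volume.restrict (Ioc (0:ℝ) (A + γ))] D := by
      rw [Filter.EventuallyLE, ae_restrict_iff' measurableSet_Ioc]
      exact Filter.Eventually.of_forall fun u hu => hD0 u ⟨hu.1.le, hu.2⟩
    rw [MeasureTheory.integral_pos_iff_support_of_nonneg_ae hnn hIDon]
    rw [Measure.restrict_apply' measurableSet_Ioc]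
    refine lt_of_lt_of_le hTpos (measure_mono ?_)
    intro x hx
    exact ⟨ne_of_gt (hDpos x ⟨hx.1.1.le, hx.1.2.le⟩ hx.2), ⟨hx.1.1, hx.1.2.le⟩⟩
  linarith [key, Snn, hDint_pos]
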